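/- Let D be a domain in ℝⁿ and T ∈ (0,∞]. Suppose for each t ∈ [0,T) the map a ↦ X(a,t) is a diffeomorphism of D with inverse A(·,t), and suppose sup over (a,t) ∈ D×[0,T) of |det(∇ₐX(a,t))| is finite. Let W : D×[0,T) → ℝⁿ be a vector field transported by X, i.e. W(X(a,t),t) = ∇ₐX(a,t)·W₀(a) for all (a,t), where W₀ = W(·,0) satisfies ‖W₀‖_{L^∞(D)} < ∞. For each (x,t) let λ₁(x,t) ≥ λ₂(x,t) ≥ ⋯ ≥ λₙ(x,t) > 0 be the eigenvalues of the symmetric positive definite matrix M(x,t) = (∇A(x,t))ᵀ ∇A(x,t). If there exists a sequence (x_k,t_k) ∈ D×[0,T) converging to some (x̄,t̄) ∈ closure(D)×[0,T] with |W(x_k,t_k)| → ∞ as k → ∞, then necessarily λ₁(x_k,t_k) → ∞ and λₙ(x_k,t_k) → 0 as k → ∞. -/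

import Mathlib

open Filter Topology Set
open scoped ENNReal RealInnerProductSpace

noncomputable section

private lemma det_clm_adjoint {m : ℕ}
    (K : EuclideanSpace ℝ (Fin m) →L[ℝ] EuclideanSpace ℝ (Fin m)) :
    LinearMap.det ((ContinuousLinearMap.adjoint K :
        EuclideanSpace ℝ (Fin m) →L[ℝ] EuclideanSpace ℝ (Fin m)) :
        EuclideanSpace ℝ (Fin m) →ₗ[ℝ] EuclideanSpace ℝ (Fin m))
      = LinearMap.det ((K : EuclideanSpace ℝ (Fin m) →L[ℝ] EuclideanSpace ℝ (Fin m)) :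
        EuclideanSpace ℝ (Fin m) →ₗ[ℝ] EuclideanSpace ℝ (Fin m)) := by
  set b := EuclideanSpace.basisFun (Fin m) ℝ with hb
  have hco : ((ContinuousLinearMap.adjoint K :
        EuclideanSpace ℝ (Fin m) →L[ℝ] EuclideanSpace ℝ (Fin m)) :
        EuclideanSpace ℝ (Fin m) →ₗ[ℝ] EuclideanSpace ℝ (Fin m))
      = LinearMap.adjoint (K : EuclideanSpace ℝ (Fin m) →ₗ[ℝ] EuclideanSpace ℝ (Fin m)) := by
    rw [LinearMap.adjoint_eq_toCLM_adjoint]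
    congr 1
  rw [hco, ← LinearMap.det_toMatrix b.toBasis, ← LinearMap.det_toMatrix b.toBasis,
    LinearMap.toMatrix_adjoint b b, Matrix.det_conjTranspose]
  simp

private lemma min_eig_bound {m : ℕ}
    (K : EuclideanSpace ℝ (Fin (m + 1)) →L[ℝ] EuclideanSpace ℝ (Fin (m + 1)))
    (lam : Fin (m + 1) → ℝ) (E : Fin (m + 1) → EuclideanSpace ℝ (Fin (m + 1)))
    (horth : Orthonormal ℝ E)
    (heig : ∀ j, (ContinuousLinearMap.adjoint K ∘L K) (E j) = lam j • E j)
    (μ : ℝ) (hμ : ∀ j, μ ≤ lam j) (v : EuclideanSpace ℝ (Fin (m + 1))) :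
    μ * ‖v‖ ^ 2 ≤ ‖K v‖ ^ 2 := by
  have card : Fintype.card (Fin (m + 1))
      = Module.finrank ℝ (EuclideanSpace ℝ (Fin (m + 1))) := by
    simp [finrank_euclideanSpace]
  set b : Module.Basis (Fin (m + 1)) ℝ (EuclideanSpace ℝ (Fin (m + 1))) :=
    basisOfOrthonormalOfCardEqFinrank horth card with hbdef
  have hbe : ⇑b = E := coe_basisOfOrthonormalOfCardEqFinrank horth card
  have horthb : Orthonormal ℝ ⇑b := hbe ▸ horth
  set ob := b.toOrthonormalBasis horthb with hobdef
  have hobe : ∀ j, ob j = E j := fun j => by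
    rw [hobdef, Module.Basis.coe_toOrthonormalBasis, hbe]
  have expand : ∀ x y : EuclideanSpace ℝ (Fin (m + 1)),
      ⟪x, y⟫ = ∑ j, ⟪x, E j⟫ * ⟪E j, y⟫ := by
    intro x y
    rw [← ob.sum_inner_mul_inner x y]
    congr 1; ext j; rw [hobe]
  set M := ContinuousLinearMap.adjoint K ∘L K with hM
  have hMinner : ∀ x j, ⟪M x, E j⟫ = lam j * ⟪E j, x⟫ := by
    intro x j
    have h1 : ⟪M x, E j⟫ = ⟪K x, K (E j)⟫ := by
      rw [hM]; exact ContinuousLinearMap.adjoint_inner_left K (E j) (K x)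
    have h2 : ⟪M (E j), x⟫ = ⟪K (E j), K x⟫ := by
      rw [hM]; exact ContinuousLinearMap.adjoint_inner_left K x (K (E j))
    rw [h1, real_inner_comm, ← h2, heig j, real_inner_smul_left]
  have hnorm : ‖v‖ ^ 2 = ∑ j, ⟪E j, v⟫ ^ 2 := by
    rw [← real_inner_self_eq_norm_sq, expand v v]
    congr 1; ext j; rw [real_inner_comm v (E j), sq]
  have hKnorm : ‖K v‖ ^ 2 = ∑ j, lam j * ⟪E j, v⟫ ^ 2 := by
    rw [← real_inner_self_eq_norm_sq]
    have : ⟪K v, K v⟫ = ⟪M v, v⟫ := by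
      rw [hM]; exact (ContinuousLinearMap.adjoint_inner_left K v (K v)).symm
    rw [this, expand (M v) v]
    congr 1; ext j
    rw [hMinner v j, sq]; ring
  rw [hnorm, hKnorm, Finset.mul_sum]
  apply Finset.sum_le_sum
  intro j _
  exact mul_le_mul_of_nonneg_right (hμ j) (sq_nonneg _)

private lemma detsq_eq_prod {m : ℕ}
    (K : EuclideanSpace ℝ (Fin (m + 1)) →L[ℝ] EuclideanSpace ℝ (Fin (m + 1)))
    (lam : Fin (m + 1) → ℝ) (E : Fin (m + 1) → EuclideanSpace ℝ (Fin (m + 1)))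
    (horth : Orthonormal ℝ E)
    (heig : ∀ j, (ContinuousLinearMap.adjoint K ∘L K) (E j) = lam j • E j) :
    (LinearMap.det (K : EuclideanSpace ℝ (Fin (m + 1)) →ₗ[ℝ] EuclideanSpace ℝ (Fin (m + 1)))) ^ 2
      = ∏ j, lam j := by
  have card : Fintype.card (Fin (m + 1))
      = Module.finrank ℝ (EuclideanSpace ℝ (Fin (m + 1))) := by
    simp [finrank_euclideanSpace]
  set b : Module.Basis (Fin (m + 1)) ℝ (EuclideanSpace ℝ (Fin (m + 1))) :=
    basisOfOrthonormalOfCardEqFinrank horth card with hbdef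
  have hbe : ⇑b = E := coe_basisOfOrthonormalOfCardEqFinrank horth card
  set Mlin := ((ContinuousLinearMap.adjoint K ∘L K :
      EuclideanSpace ℝ (Fin (m + 1)) →L[ℝ] EuclideanSpace ℝ (Fin (m + 1))) :
      EuclideanSpace ℝ (Fin (m + 1)) →ₗ[ℝ] EuclideanSpace ℝ (Fin (m + 1))) with hMlin
  have hdiag : LinearMap.toMatrix b b Mlin = Matrix.diagonal lam := by
    ext i j
    rw [LinearMap.toMatrix_apply]
    have hstep : Mlin (b j) = lam j • b j := by
      have hEb : b j = E j := congrFun hbe j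
      show (ContinuousLinearMap.adjoint K ∘L K) (b j) = lam j • b j
      rw [hEb]
      exact heig j
    rw [hstep, map_smul, Module.Basis.repr_self]
    rcases eq_or_ne i j with h | h
    · subst h; simp
    · simp [Matrix.diagonal_apply_ne _ h, Finsupp.single_apply, Ne.symm h]
  have hdet1 : LinearMap.det Mlin = ∏ j, lam j := by
    rw [← LinearMap.det_toMatrix b, hdiag, Matrix.det_diagonal]
  have hdet2 : LinearMap.det Mlin
      = (LinearMap.det ((K : EuclideanSpace ℝ (Fin (m + 1)) →L[ℝ] EuclideanSpace ℝ (Fin (m + 1))) :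
        EuclideanSpace ℝ (Fin (m + 1)) →ₗ[ℝ] EuclideanSpace ℝ (Fin (m + 1)))) ^ 2 := by
    rw [hMlin, ContinuousLinearMap.toLinearMap_comp, LinearMap.det_comp, det_clm_adjoint, sq]
  rw [← hdet1, hdet2]

/-- Let `D ⊆ ℝⁿ` be a domain, `T ∈ (0,∞]`, and for each `t ∈ [0,T)` let
`X(·,t)` be a diffeomorphism of `D` with inverse `A(·,t)`, with
`sup_{(a,t)} |det ∇ₐX(a,t)| < ∞`.  Let `W` be a vector field transported by `X` with
`‖W₀‖_{L^∞(D)} < ∞`, and let `λ₁ ≥ ⋯ ≥ λₙ > 0` be the eigenvalues of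
`M(x,t) = (∇A(x,t))ᵀ∇A(x,t)`.  If `(x_k,t_k) → (x̄,t̄) ∈ closure D × [0,T]` with
`|W(x_k,t_k)| → ∞`, then `λ₁(x_k,t_k) → ∞` and `λₙ(x_k,t_k) → 0`. -/
theorem singularity_forces_eigenvalue_blowup
    (n : ℕ)
    (D : Set (EuclideanSpace ℝ (Fin (n + 1)))) (hD : IsOpen D)
    (T : ℝ≥0∞) (hT : 0 < T)
    (Tdom : Set ℝ) (hTdom : Tdom = {t : ℝ | 0 ≤ t ∧ ENNReal.ofReal t < T})
    (X A W : EuclideanSpace ℝ (Fin (n + 1)) → ℝ → EuclideanSpace ℝ (Fin (n + 1)))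
    -- `X(·,t)` is a diffeomorphism of `D` with inverse `A(·,t)`
    (hXmaps : ∀ t ∈ Tdom, Set.MapsTo (fun a => X a t) D D)
    (hAmaps : ∀ t ∈ Tdom, Set.MapsTo (fun x => A x t) D D)
    (hAX : ∀ t ∈ Tdom, ∀ a ∈ D, A (X a t) t = a)
    (hXA : ∀ t ∈ Tdom, ∀ x ∈ D, X (A x t) t = x)
    (hXdiff : ∀ t ∈ Tdom, ∀ a ∈ D, DifferentiableAt ℝ (fun a => X a t) a)
    (hAdiff : ∀ t ∈ Tdom, ∀ x ∈ D, DifferentiableAt ℝ (fun x => A x t) x)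
    -- uniformly bounded Jacobian determinant of `∇ₐX`
    (hdet : ∃ C : ℝ, ∀ t ∈ Tdom, ∀ a ∈ D,
      |LinearMap.det ((fderiv ℝ (fun a => X a t) a : EuclideanSpace ℝ (Fin (n + 1)) →L[ℝ]
        EuclideanSpace ℝ (Fin (n + 1))) : EuclideanSpace ℝ (Fin (n + 1)) →ₗ[ℝ]
        EuclideanSpace ℝ (Fin (n + 1)))| ≤ C)
    -- `W` is transported by `X`:  `W(X(a,t),t) = ∇ₐX(a,t)·W₀(a)`, `W₀ = W(·,0)`
    (htrans : ∀ t ∈ Tdom, ∀ a ∈ D, W (X a t) t = fderiv ℝ (fun a => X a t) a (W a 0))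
    -- `‖W₀‖_{L^∞(D)} < ∞`
    (hW0 : ∃ C : ℝ, ∀ a ∈ D, ‖W a 0‖ ≤ C)
    -- eigenvalues (decreasing) and orthonormal eigenvectors of `M = (∇A)ᵀ∇A`
    (lam : Fin (n + 1) → EuclideanSpace ℝ (Fin (n + 1)) → ℝ → ℝ)
    (e : Fin (n + 1) → EuclideanSpace ℝ (Fin (n + 1)) → ℝ →
      EuclideanSpace ℝ (Fin (n + 1)))
    (horth : ∀ t ∈ Tdom, ∀ x ∈ D, Orthonormal ℝ (fun j => e j x t))
    (heig : ∀ t ∈ Tdom, ∀ x ∈ D, ∀ j,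
      (ContinuousLinearMap.adjoint (fderiv ℝ (fun x => A x t) x) ∘L
        fderiv ℝ (fun x => A x t) x) (e j x t) = lam j x t • e j x t)
    (hord : ∀ t ∈ Tdom, ∀ x ∈ D, ∀ i j : Fin (n + 1), i ≤ j → lam j x t ≤ lam i x t)
    (hpos : ∀ t ∈ Tdom, ∀ x ∈ D, ∀ j, 0 < lam j x t)
    -- a blow-up sequence `(x_k, t_k) → (x̄, t̄) ∈ closure D × [0,T]`
    (xk : ℕ → EuclideanSpace ℝ (Fin (n + 1))) (tk : ℕ → ℝ)
    (hmem : ∀ k, xk k ∈ D ∧ tk k ∈ Tdom)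
    (xbar : EuclideanSpace ℝ (Fin (n + 1))) (tbar : ℝ)
    (hxbar : xbar ∈ closure D) (htbar : 0 ≤ tbar ∧ ENNReal.ofReal tbar ≤ T)
    (hconv : Tendsto (fun k => (xk k, tk k)) atTop (𝓝 (xbar, tbar)))
    (hblow : Tendsto (fun k => ‖W (xk k) (tk k)‖) atTop atTop) :
    Tendsto (fun k => lam 0 (xk k) (tk k)) atTop atTop ∧
    Tendsto (fun k => lam (Fin.last n) (xk k) (tk k)) atTop (𝓝 0) := by
  obtain ⟨C, hC⟩ := hdet
  obtain ⟨CW, hCW⟩ := hW0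
  -- the key pointwise estimates
  have key : ∀ k, lam (Fin.last n) (xk k) (tk k) * ‖W (xk k) (tk k)‖ ^ 2 ≤ CW ^ 2 ∧
      (1 / C) ^ 2 ≤ lam 0 (xk k) (tk k) ^ n * lam (Fin.last n) (xk k) (tk k) ∧ 0 < C := by
    intro k
    obtain ⟨hx, ht⟩ := hmem k
    set x := xk k with hxdef
    set t := tk k with htdef
    set a := A x t with hadef
    have ha : a ∈ D := hAmaps t ht hx
    have hXa : X a t = x := hXA t ht x hx
    set K := fderiv ℝ (fun y => A y t) x with hKdef
    set L := fderiv ℝ (fun y => X y t) a with hLdef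
    -- chain rule : K ∘L L = id
    have hKL : K ∘L L = ContinuousLinearMap.id ℝ (EuclideanSpace ℝ (Fin (n + 1))) := by
      have hcomp := fderiv_comp a (hAdiff t ht (X a t) (hXmaps t ht ha)) (hXdiff t ht a ha)
      have hfun : ((fun y => A y t) ∘ (fun y => X y t)) = fun y => A (X y t) t := rfl
      rw [hfun, hXa] at hcomp
      have hev : (fun y => A (X y t) t) =ᶠ[𝓝 a] (fun y => y) := by
        filter_upwards [hD.mem_nhds ha] with y hy
        exact hAX t ht y hy
      have hid : fderiv ℝ (fun y => A (X y t) t) a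
          = ContinuousLinearMap.id ℝ (EuclideanSpace ℝ (Fin (n + 1))) := by
        rw [hev.fderiv_eq]; exact fderiv_id'
      rw [← hcomp]; exact hid
    -- transport : K (W x t) = W a 0
    have hWx : W x t = L (W a 0) := by
      have := htrans t ht a ha
      rw [hXa] at this
      exact this
    have hKW : K (W x t) = W a 0 := by
      rw [hWx, ← ContinuousLinearMap.comp_apply, hKL, ContinuousLinearMap.id_apply]
    -- first estimate
    have est1 : lam (Fin.last n) x t * ‖W x t‖ ^ 2 ≤ CW ^ 2 := by
      have hb := min_eig_bound K (fun j => lam j x t) (fun j => e j x t)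
        (horth t ht x hx) (fun j => heig t ht x hx j) (lam (Fin.last n) x t)
        (fun j => hord t ht x hx j (Fin.last n) (Fin.le_last j)) (W x t)
      calc lam (Fin.last n) x t * ‖W x t‖ ^ 2 ≤ ‖K (W x t)‖ ^ 2 := hb
        _ = ‖W a 0‖ ^ 2 := by rw [hKW]
        _ ≤ CW ^ 2 := pow_le_pow_left₀ (norm_nonneg _) (hCW a ha) 2
    -- determinant estimate
    have hdetmul : LinearMap.det (K : EuclideanSpace ℝ (Fin (n + 1)) →ₗ[ℝ] _)
        * LinearMap.det (L : EuclideanSpace ℝ (Fin (n + 1)) →ₗ[ℝ] _) = 1 := by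
      have h1 : LinearMap.det ((K ∘L L : EuclideanSpace ℝ (Fin (n + 1)) →L[ℝ] _) :
          EuclideanSpace ℝ (Fin (n + 1)) →ₗ[ℝ] _) = 1 := by
        rw [hKL, ContinuousLinearMap.coe_id, LinearMap.det_id]
      rwa [ContinuousLinearMap.toLinearMap_comp, LinearMap.det_comp] at h1
    have hdetL := hC t ht a ha
    have hdetLne : LinearMap.det (L : EuclideanSpace ℝ (Fin (n + 1)) →ₗ[ℝ] _) ≠ 0 := by
      intro h0
      rw [h0, mul_zero] at hdetmul
      exact absurd hdetmul (by norm_num)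
    have hCpos : 0 < C :=
      lt_of_lt_of_le (abs_pos.mpr hdetLne) hdetL
    have hdetKlow : 1 / C ≤ |LinearMap.det (K : EuclideanSpace ℝ (Fin (n + 1)) →ₗ[ℝ] _)| := by
      rw [div_le_iff₀ hCpos]
      have h1 : (1 : ℝ) = |LinearMap.det (K : EuclideanSpace ℝ (Fin (n + 1)) →ₗ[ℝ] _)|
          * |LinearMap.det (L : EuclideanSpace ℝ (Fin (n + 1)) →ₗ[ℝ] _)| := by
        rw [← abs_mul, hdetmul, abs_one]
      rw [h1]
      exact mul_le_mul_of_nonneg_left hdetL (abs_nonneg _)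
    have hprod : (1 / C) ^ 2 ≤ ∏ j, lam j x t := by
      have := detsq_eq_prod K (fun j => lam j x t) (fun j => e j x t)
        (horth t ht x hx) (fun j => heig t ht x hx j)
      calc (1 / C) ^ 2 ≤ |LinearMap.det (K : EuclideanSpace ℝ (Fin (n + 1)) →ₗ[ℝ] _)| ^ 2 :=
            pow_le_pow_left₀ (by positivity) hdetKlow 2
        _ = LinearMap.det (K : EuclideanSpace ℝ (Fin (n + 1)) →ₗ[ℝ] _) ^ 2 := sq_abs _
        _ = ∏ j, lam j x t := this
    have hsplit : ∏ j, lam j x t ≤ lam 0 x t ^ n * lam (Fin.last n) x t := by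
      have hmem' : Fin.last n ∈ (Finset.univ : Finset (Fin (n + 1))) := Finset.mem_univ _
      rw [← Finset.prod_erase_mul _ _ hmem']
      apply mul_le_mul_of_nonneg_right _ (hpos t ht x hx (Fin.last n)).le
      calc ∏ j ∈ Finset.univ.erase (Fin.last n), lam j x t
          ≤ ∏ _j ∈ Finset.univ.erase (Fin.last n), lam 0 x t :=
            Finset.prod_le_prod (fun j _ => (hpos t ht x hx j).le)
              (fun j _ => hord t ht x hx 0 j (Fin.zero_le j))
        _ = lam 0 x t ^ n := by
            rw [Finset.prod_const, Finset.card_erase_of_mem hmem', Finset.card_univ]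
            simp
    exact ⟨est1, le_trans hprod hsplit, hCpos⟩
  have hCpos : 0 < C := (key 0).2.2
  -- the last eigenvalue tends to 0
  have hWsq : Tendsto (fun k => ‖W (xk k) (tk k)‖ ^ 2) atTop atTop := by
    have := hblow.atTop_mul_atTop₀ hblow
    simpa [sq] using this
  have hupper : Tendsto (fun k => CW ^ 2 / ‖W (xk k) (tk k)‖ ^ 2) atTop (𝓝 0) :=
    tendsto_const_nhds.div_atTop hWsq
  have hlast0 : Tendsto (fun k => lam (Fin.last n) (xk k) (tk k)) atTop (𝓝 0) := by
    apply tendsto_of_tendsto_of_tendsto_of_le_of_le' tendsto_const_nhds hupper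
    · exact Eventually.of_forall fun k => ((hpos (tk k) (hmem k).2 (xk k) (hmem k).1 _).le)
    · filter_upwards [hblow.eventually_ge_atTop 1] with k hk
      have hWpos : (0 : ℝ) < ‖W (xk k) (tk k)‖ ^ 2 := by positivity
      rw [le_div_iff₀ hWpos]
      exact (key k).1
  refine ⟨?_, hlast0⟩
  -- the first eigenvalue blows up
  have hlow : Tendsto (fun k => (C ^ 2 * lam (Fin.last n) (xk k) (tk k))⁻¹) atTop atTop := by
    apply Tendsto.inv_tendsto_nhdsGT_zero
    rw [tendsto_nhdsWithin_iff]
    constructor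
    · simpa using hlast0.const_mul (C ^ 2)
    · exact Eventually.of_forall fun k => by
        have := hpos (tk k) (hmem k).2 (xk k) (hmem k).1 (Fin.last n)
        exact Set.mem_Ioi.mpr (by positivity)
  have hpow : Tendsto (fun k => lam 0 (xk k) (tk k) ^ n) atTop atTop := by
    apply tendsto_atTop_mono' atTop _ hlow
    filter_upwards with k
    have hq : 0 < lam (Fin.last n) (xk k) (tk k) :=
      hpos (tk k) (hmem k).2 (xk k) (hmem k).1 (Fin.last n)
    have h2 := (key k).2.1
    have h3 : (0 : ℝ) < C ^ 2 * lam (Fin.last n) (xk k) (tk k) := by positivity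
    rw [inv_eq_one_div, div_le_iff₀ h3]
    have h4 : (1 / C) ^ 2 * C ^ 2 = 1 := by
      field_simp
    nlinarith [mul_le_mul_of_nonneg_right h2 (le_of_lt (pow_pos hCpos 2))]
  rcases Nat.eq_zero_or_pos n with hn | hn
  · exfalso
    subst hn
    simp only [pow_zero] at hpow
    exact not_tendsto_atTop_of_tendsto_nhds
      (tendsto_const_nhds : Tendsto (fun _ : ℕ => (1 : ℝ)) atTop (𝓝 1)) hpow
  · rw [tendsto_atTop]
    intro b
    filter_upwards [hpow.eventually_ge_atTop (max b 1 ^ n)] with k hk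
    have hb1 : (0 : ℝ) ≤ max b 1 := le_trans zero_le_one (le_max_right _ _)
    have hl0 : 0 ≤ lam 0 (xk k) (tk k) :=
      (hpos (tk k) (hmem k).2 (xk k) (hmem k).1 0).le
    have := (pow_le_pow_iff_left₀ hb1 hl0 hn.ne').mp hk
    exact le_trans (le_max_left b 1) this
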